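/- Let A be a Noetherian integrally closed domain and B a faithfully flat Noetherian A-algebra. Let M be a finitely generated A-module. Then M is reflexive (the natural map M → M^∨∨ into the double dual is an isomorphism) if and only if M ⊗_A B is a reflexive B-module. -/

import Mathlib

open TensorProduct



section HomBaseChange

variable (A B : Type*) [CommRing A] [CommRing B] [Algebra A B]
variable (M N : Type*) [AddCommGroup M] [Module A M] [AddCommGroup N] [Module A N]

noncomputable def homBC : B ⊗[A] (M →ₗ[A] N) →ₗ[B] (B ⊗[A] M →ₗ[B] B ⊗[A] N) :=
  LinearMap.liftBaseChange B
    { toFun := fun f => f.baseChange B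
      map_add' := fun _ _ => LinearMap.baseChange_add _ _
      map_smul' := fun _ _ => LinearMap.baseChange_smul _ _ }

@[simp] lemma homBC_tmul (b : B) (f : M →ₗ[A] N) :
    homBC A B M N (b ⊗ₜ f) = b • f.baseChange B := by
  simp [homBC]

lemma homBC_natural {M' : Type*} [AddCommGroup M'] [Module A M'] (g : M' →ₗ[A] M)
    (x : B ⊗[A] (M →ₗ[A] N)) :
    homBC A B M' N ((LinearMap.lcomp A N g).baseChange B x)
      = (homBC A B M N x).comp (g.baseChange B) := by
  induction x using TensorProduct.induction_on with
  | zero => simp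
  | tmul b f =>
    simp [LinearMap.lcomp_apply', LinearMap.baseChange_comp, LinearMap.smul_comp]
  | add x y hx hy =>
    simp only [map_add, LinearMap.add_comp, hx, hy]

variable (n : ℕ)

/-- σ i : N →ₗ[A] Hom(Aⁿ, N), n ↦ (x ↦ x i • n). -/
noncomputable def sigmaMap (i : Fin n) : N →ₗ[A] ((Fin n → A) →ₗ[A] N) :=
  (LinearMap.smulRightₗ : ((Fin n → A) →ₗ[A] A) →ₗ[A] N →ₗ[A] ((Fin n → A) →ₗ[A] N))
    (LinearMap.proj i)

noncomputable def homBCInv :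
    ((B ⊗[A] (Fin n → A)) →ₗ[B] B ⊗[A] N) →ₗ[B] B ⊗[A] ((Fin n → A) →ₗ[A] N) :=
  ∑ i : Fin n,
    (LinearMap.baseChange B (sigmaMap A N n i)).comp
      (LinearMap.applyₗ ((1 : B) ⊗ₜ Pi.single i 1))

lemma sum_sigma (f : (Fin n → A) →ₗ[A] N) :
    ∑ i : Fin n, sigmaMap A N n i (f (Pi.single i 1)) = f := by
  refine LinearMap.ext fun x => ?_
  rw [LinearMap.sum_apply]
  conv_rhs => rw [LinearMap.pi_apply_eq_sum_univ f x]
  refine Finset.sum_congr rfl fun i _ => ?_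
  simp only [sigmaMap, LinearMap.smulRightₗ_apply, LinearMap.proj_apply]
  rw [LinearMap.smulRight_apply, LinearMap.proj_apply]
  congr 2
  funext j
  simp [Pi.single_apply, eq_comm]

lemma homBCInv_apply_baseChange (f : (Fin n → A) →ₗ[A] N) :
    homBCInv A B N n (LinearMap.baseChange B f) = (1 : B) ⊗ₜ f := by
  rw [homBCInv, LinearMap.sum_apply]
  have step : ∀ i : Fin n,
      ((LinearMap.baseChange B (sigmaMap A N n i)).comp
        (LinearMap.applyₗ ((1 : B) ⊗ₜ Pi.single i 1))) (LinearMap.baseChange B f)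
      = (1 : B) ⊗ₜ (sigmaMap A N n i (f (Pi.single i 1))) := by
    intro i
    show LinearMap.baseChange B (sigmaMap A N n i)
      (LinearMap.baseChange B f ((1 : B) ⊗ₜ Pi.single i 1)) = _
    simp
  rw [Finset.sum_congr rfl fun i _ => step i, ← tmul_sum, sum_sigma]

lemma homBCInv_comp :
    (homBCInv A B N n).comp (homBC A B (Fin n → A) N) = LinearMap.id := by
  ext f
  simp [homBCInv_apply_baseChange]

lemma homBC_key (i : Fin n) (x : Fin n → A) (t : B ⊗[A] N) :
    homBC A B (Fin n → A) N ((sigmaMap A N n i).baseChange B t) (1 ⊗ₜ x)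
      = x i • t := by
  induction t with
  | zero => simp
  | tmul b nn =>
    simp [sigmaMap, TensorProduct.smul_tmul', TensorProduct.tmul_smul]
  | add u v hu hv => simp [hu, hv]

lemma comp_homBCInv :
    (homBC A B (Fin n → A) N).comp (homBCInv A B N n) = LinearMap.id := by
  have claim : ∀ (g : B ⊗[A] (Fin n → A) →ₗ[B] B ⊗[A] N) (x : Fin n → A),
      homBC A B (Fin n → A) N (homBCInv A B N n g) ((1 : B) ⊗ₜ x) = g (1 ⊗ₜ x) := by
    intro g x
    rw [homBCInv, LinearMap.sum_apply, map_sum, LinearMap.sum_apply]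
    have step : ∀ i : Fin n,
        (homBC A B (Fin n → A) N
          (((LinearMap.baseChange B (sigmaMap A N n i)).comp
            (LinearMap.applyₗ ((1 : B) ⊗ₜ Pi.single i 1))) g)) ((1:B) ⊗ₜ x)
        = g (x i • ((1:B) ⊗ₜ Pi.single i 1)) := by
      intro i
      rw [LinearMap.map_smul_of_tower]
      simp only [LinearMap.coe_comp, Function.comp_apply]
      rw [show (LinearMap.applyₗ ((1:B) ⊗ₜ[A] Pi.single i (1:A))) g
            = g ((1:B) ⊗ₜ Pi.single i 1) from rfl]
      rw [homBC_key]
    rw [Finset.sum_congr rfl fun i _ => step i, ← map_sum]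
    congr 1
    have single_eq : ∀ i : Fin n, x i • ((1 : B) ⊗ₜ[A] (Pi.single i (1 : A) : Fin n → A))
        = (1 : B) ⊗ₜ[A] (Pi.single i (x i) : Fin n → A) := by
      intro i
      have h2 : (x i) • ((1:B) ⊗ₜ[A] (Pi.single i (1:A) : Fin n → A))
          = (1:B) ⊗ₜ[A] ((x i) • (Pi.single i (1:A) : Fin n → A)) :=
        (TensorProduct.tmul_smul _ _ _).symm
      rw [h2]
      congr 1
      funext j
      simp [Pi.single_apply, mul_comm]
    rw [Finset.sum_congr rfl fun i _ => single_eq i, ← tmul_sum, Finset.univ_sum_single]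
  ext g x
  simpa using claim g (Pi.single x 1)

lemma homBC_free_bijective : Function.Bijective (homBC A B (Fin n → A) N) := by
  constructor
  · intro u v h
    have h1 := fun u => LinearMap.congr_fun (homBCInv_comp A B N n) u
    simpa [h] using (h1 u).symm.trans (by rw [LinearMap.comp_apply, h, ← LinearMap.comp_apply,
      homBCInv_comp, LinearMap.id_apply])
  · intro g
    exact ⟨homBCInv A B N n g, LinearMap.congr_fun (comp_homBCInv A B N n) g⟩

end HomBaseChange

section General

variable (A B : Type*) [CommRing A] [CommRing B] [Algebra A B]
variable (M N : Type*) [AddCommGroup M] [Module A M] [AddCommGroup N] [Module A N]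

theorem homBC_bijective [IsNoetherianRing A] [Module.Flat A B] [Module.Finite A M] :
    Function.Bijective (homBC A B M N) := by
  classical
  obtain ⟨n, π, hπ⟩ := Module.Finite.exists_fin' A M
  have : Module.Finite A (LinearMap.ker π) := by
    rw [Module.Finite.iff_fg]
    exact IsNoetherian.noetherian _
  obtain ⟨m, ρ, hρ⟩ := Module.Finite.exists_fin' A (LinearMap.ker π)
  set g : (Fin m → A) →ₗ[A] (Fin n → A) := (LinearMap.ker π).subtype ∘ₗ ρ with hg
  have hrange : LinearMap.range g = LinearMap.ker π := by
    rw [hg, LinearMap.range_comp, LinearMap.range_eq_top.mpr hρ, Submodule.map_top,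
      Submodule.range_subtype]
  have hπg : π ∘ₗ g = 0 := by
    refine LinearMap.ext fun v => ?_
    have hm : g v ∈ LinearMap.ker π := hrange ▸ LinearMap.mem_range_self g v
    simpa using hm
  set jj : (M →ₗ[A] N) →ₗ[A] ((Fin n → A) →ₗ[A] N) := LinearMap.lcomp A N π with hjj
  set qq : ((Fin n → A) →ₗ[A] N) →ₗ[A] ((Fin m → A) →ₗ[A] N) := LinearMap.lcomp A N g with hqq
  have hjinj : Function.Injective jj := by
    intro f1 f2 h
    ext x
    obtain ⟨y, rfl⟩ := hπ x
    exact LinearMap.congr_fun h y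
  have hexact2 : Function.Exact jj qq := by
    intro h
    constructor
    · intro h0
      have hle : LinearMap.ker π ≤ LinearMap.ker h := by
        rw [← hrange]
        rintro _ ⟨y, rfl⟩
        simpa [hqq] using LinearMap.congr_fun h0 y
      refine ⟨((LinearMap.ker π).liftQ h hle) ∘ₗ
        (π.quotKerEquivOfSurjective hπ).symm.toLinearMap, ?_⟩
      refine LinearMap.ext fun x => ?_
      have e1 : (π.quotKerEquivOfSurjective hπ).symm (π x) = (LinearMap.ker π).mkQ x := by
        rw [LinearEquiv.symm_apply_eq]
        rfl
      simp only [hjj, LinearMap.lcomp_apply, LinearMap.coe_comp, Function.comp_apply,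
        LinearEquiv.coe_coe, e1, Submodule.liftQ_apply]
      rw [Submodule.mkQ_apply, Submodule.liftQ_apply]
    · rintro ⟨f, rfl⟩
      refine LinearMap.ext fun v => ?_
      have h1 : π (g v) = 0 := by simpa using LinearMap.congr_fun hπg v
      simp [hqq, hjj, h1]
  -- base-changed exactness and injectivity
  have hjinjB : Function.Injective (jj.baseChange B) := by
    rw [LinearMap.baseChange_eq_ltensor]
    exact Module.Flat.lTensor_preserves_injective_linearMap jj hjinj
  have hexactB : Function.Exact (jj.baseChange B) (qq.baseChange B) := by
    have := Module.Flat.lTensor_exact B hexact2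
    intro y
    rw [show (qq.baseChange B) y = (qq.lTensor B) y from rfl]
    rw [this y]
    constructor
    · rintro ⟨z, rfl⟩; exact ⟨z, rfl⟩
    · rintro ⟨z, rfl⟩; exact ⟨z, rfl⟩
  constructor
  · intro x y hxy
    apply hjinjB
    apply (homBC_free_bijective A B N n).injective
    rw [show jj.baseChange B x = (LinearMap.lcomp A N π).baseChange B x from rfl,
      homBC_natural, homBC_natural, hxy]
  · intro φ
    obtain ⟨y, hy⟩ := (homBC_free_bijective A B N n).surjective (φ.comp (π.baseChange B))
    have h0 : qq.baseChange B y = 0 := by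
      apply (homBC_free_bijective A B N m).injective
      rw [show qq.baseChange B y = (LinearMap.lcomp A N g).baseChange B y from rfl,
        homBC_natural, hy, map_zero, LinearMap.comp_assoc, ← LinearMap.baseChange_comp, hπg]
      ext v
      simp
    obtain ⟨z, hz⟩ := (hexactB y).mp h0
    refine ⟨z, ?_⟩
    have hnat := homBC_natural A B M N π z
    rw [show (LinearMap.lcomp A N π).baseChange B z = jj.baseChange B z from rfl, hz, hy] at hnat
    have hsurj : Function.Surjective (π.baseChange B) := by
      rw [LinearMap.baseChange_eq_ltensor]
      exact LinearMap.lTensor_surjective B hπ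
    refine LinearMap.ext fun v => ?_
    obtain ⟨w, rfl⟩ := hsurj v
    exact (LinearMap.congr_fun hnat w).symm

end General

section Dual

variable (A B : Type*) [CommRing A] [CommRing B] [Algebra A B]
variable (M : Type*) [AddCommGroup M] [Module A M]
variable [IsNoetherianRing A] [Module.Flat A B] [Module.Finite A M]

noncomputable def dualBC : B ⊗[A] (Module.Dual A M) ≃ₗ[B] Module.Dual B (B ⊗[A] M) :=
  (LinearEquiv.ofBijective (homBC A B M A) (homBC_bijective A B M A)).trans
    (LinearEquiv.arrowCongr (LinearEquiv.refl B (B ⊗[A] M))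
      (Algebra.TensorProduct.rid A B B).toLinearEquiv)

lemma dualBC_tmul (b : B) (f : Module.Dual A M) (c : B) (m : M) :
    dualBC A B M (b ⊗ₜ f) (c ⊗ₜ m) = (b * c) * algebraMap A B (f m) := by
  simp only [dualBC, LinearEquiv.trans_apply, LinearEquiv.arrowCongr_apply,
    LinearEquiv.ofBijective_apply, homBC_tmul, LinearEquiv.refl_symm, LinearEquiv.refl_apply,
    LinearMap.smul_apply, LinearMap.baseChange_tmul, AlgEquiv.toLinearEquiv_apply,
    LinearEquiv.coe_coe, map_smul, Algebra.TensorProduct.rid_tmul]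
  rw [smul_eq_mul, Algebra.smul_def]
  ring

lemma dual_finite : Module.Finite A (Module.Dual A M) := by
  obtain ⟨n, π, hπ⟩ := Module.Finite.exists_fin' A M
  haveI : IsNoetherian A ((Fin n → A) →ₗ[A] A) := by
    haveI := Module.Finite.linearMap A A (Fin n → A) A
    exact isNoetherian_of_isNoetherianRing_of_finite A _
  refine Module.Finite.of_injective (LinearMap.lcomp A A π) ?_
  intro f1 f2 h
  ext x
  obtain ⟨y, rfl⟩ := hπ x
  exact LinearMap.congr_fun h y

end Dual

section FFlat

variable (A B : Type*) [CommRing A] [CommRing B] [Algebra A B] [Module.FaithfullyFlat A B]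
variable (M N : Type*) [AddCommGroup M] [Module A M] [AddCommGroup N] [Module A N]

lemma baseChange_bijective_iff (f : M →ₗ[A] N) :
    Function.Bijective (f.baseChange B) ↔ Function.Bijective f := by
  constructor
  · rintro ⟨hBi, hBs⟩
    constructor
    · -- injective
      haveI : Subsingleton (B ⊗[A] (LinearMap.ker f)) := by
        refine subsingleton_iff_forall_eq 0 |>.mpr fun z => ?_
        have hincl : Function.Injective ((LinearMap.ker f).subtype.baseChange B) := by
          rw [LinearMap.baseChange_eq_ltensor]
          exact Module.Flat.lTensor_preserves_injective_linearMap _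
            (Submodule.injective_subtype _)
        apply hincl
        apply hBi
        rw [map_zero, map_zero, ← LinearMap.comp_apply, ← LinearMap.baseChange_comp]
        have : f ∘ₗ (LinearMap.ker f).subtype = 0 := by
          refine LinearMap.ext fun v => ?_
          simpa using v.2
        rw [this]
        simp
      haveI := Module.FaithfullyFlat.lTensor_reflects_triviality A B (LinearMap.ker f)
      rw [← LinearMap.ker_eq_bot]
      refine (Submodule.eq_bot_iff _).mpr fun x hx => ?_
      have : (⟨x, hx⟩ : LinearMap.ker f) = 0 := Subsingleton.elim _ _
      simpa using congrArg Subtype.val this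
    · -- surjective
      haveI : Subsingleton (B ⊗[A] (N ⧸ LinearMap.range f)) := by
        refine subsingleton_iff_forall_eq 0 |>.mpr fun z => ?_
        have hmkq : Function.Surjective ((LinearMap.range f).mkQ.baseChange B) := by
          rw [LinearMap.baseChange_eq_ltensor]
          exact LinearMap.lTensor_surjective B (Submodule.mkQ_surjective _)
        obtain ⟨w, rfl⟩ := hmkq z
        obtain ⟨u, rfl⟩ := hBs w
        rw [← LinearMap.comp_apply, ← LinearMap.baseChange_comp]
        have : (LinearMap.range f).mkQ ∘ₗ f = 0 := by
          refine LinearMap.ext fun v => ?_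
          simpa [Submodule.Quotient.mk_eq_zero] using ⟨v, rfl⟩
        rw [this]
        simp
      haveI := Module.FaithfullyFlat.lTensor_reflects_triviality A B (N ⧸ LinearMap.range f)
      rw [← LinearMap.range_eq_top]
      refine Submodule.eq_top_iff'.mpr fun x => ?_
      have : ((LinearMap.range f).mkQ x) = 0 := Subsingleton.elim _ _
      simpa [Submodule.Quotient.mk_eq_zero] using this
  · rintro ⟨hi, hs⟩
    constructor
    · rw [LinearMap.baseChange_eq_ltensor]
      exact Module.Flat.lTensor_preserves_injective_linearMap f hi
    · rw [LinearMap.baseChange_eq_ltensor]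
      exact LinearMap.lTensor_surjective B hs

end FFlat

set_option synthInstance.maxHeartbeats 1000000 in
set_option maxHeartbeats 1000000 in
/-- **Reflexivity descends along faithfully flat base change.** Let `A` be a Noetherian
integrally closed domain, `B` a faithfully flat Noetherian `A`-algebra and `M` a finitely
generated `A`-module. Then `M` is reflexive (the natural evaluation map `M → M^∨∨` into the
double dual is an isomorphism) if and only if `M ⊗_A B` is a reflexive `B`-module. -/
theorem isReflexive_iff_isReflexive_baseChange
    (A B M : Type*) [CommRing A] [IsDomain A] [IsNoetherianRing A] [IsIntegrallyClosed A]
    [CommRing B] [IsNoetherianRing B] [Algebra A B] [Module.FaithfullyFlat A B]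
    [AddCommGroup M] [Module A M] [Module.Finite A M] :
    Module.IsReflexive A M ↔ Module.IsReflexive B (B ⊗[A] M) := by
  haveI : Module.Flat A B := Module.FaithfullyFlat.toFlat
  haveI : Module.Finite A (Module.Dual A M) := dual_finite A M
  set Φ := dualBC A B M with hΦ
  set Φ' := dualBC A B (Module.Dual A M) with hΦ'
  set Ψ : B ⊗[A] Module.Dual A (Module.Dual A M) ≃ₗ[B]
      Module.Dual B (Module.Dual B (B ⊗[A] M)) :=
    Φ'.trans (LinearEquiv.arrowCongr Φ (LinearEquiv.refl B B)) with hΨ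
  have key2 : ∀ (b : B) (m : M) (η : B ⊗[A] Module.Dual A M),
      Φ' (b ⊗ₜ (Module.Dual.eval A M m)) η = Φ η (b ⊗ₜ m) := by
    intro b m η
    induction η with
    | zero => simp
    | tmul c f =>
      rw [hΦ, hΦ', dualBC_tmul, dualBC_tmul]
      simp [Module.Dual.eval, mul_comm]
    | add u v hu hv => simp [map_add, hu, hv]
  have key : ∀ x : B ⊗[A] M,
      (Module.Dual.eval B (B ⊗[A] M)) x = Ψ ((Module.Dual.eval A M).baseChange B x) := by
    intro x
    induction x with
    | zero => simp
    | tmul b m =>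
      refine LinearMap.ext fun ξ => ?_
      have hξ : ξ = Φ (Φ.symm ξ) := (Φ.apply_symm_apply ξ).symm
      rw [LinearMap.baseChange_tmul]
      have : Ψ (b ⊗ₜ (Module.Dual.eval A M m)) ξ
          = Φ' (b ⊗ₜ (Module.Dual.eval A M m)) (Φ.symm ξ) := by
        simp [hΨ, LinearEquiv.arrowCongr_apply]
      rw [this, key2]
      conv_lhs => rw [hξ]
      rfl
    | add u v hu hv => rw [map_add, map_add, map_add, hu, hv]
  have evaleq : ⇑(Module.Dual.eval B (B ⊗[A] M))
      = ⇑Ψ ∘ ⇑((Module.Dual.eval A M).baseChange B) := funext key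
  constructor
  · intro h
    have hb : Function.Bijective ((Module.Dual.eval A M).baseChange B) :=
      (baseChange_bijective_iff A B M _ _).mpr h.bijective_dual_eval'
    exact ⟨by rw [evaleq]; exact Ψ.bijective.comp hb⟩
  · intro h
    have hb := h.bijective_dual_eval'
    rw [evaleq] at hb
    have : Function.Bijective ((Module.Dual.eval A M).baseChange B) :=
      (Function.Bijective.of_comp_iff' Ψ.bijective _).mp hb
    exact ⟨(baseChange_bijective_iff A B M _ _).mp this⟩
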